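/- arXiv:0706.0921 — 3 statements merged into one kernel-verified Lean document; each statement's English description precedes it below -/
import Mathlib

section
/- Lemma (fundamental solution of the twist problem). Let 𝔪(ζ) = diag(ζ^{−1/4}, ζ^{1/4}) · (1/√2)[[1,1],[−1,1]] · diag(e^{−iπ/4}, e^{iπ/4}), with ζ^{±1/4} the principal branches. Then 𝔪 is analytic on ℂ∖(−∞,0], det 𝔪(ζ) = 1 for all such ζ, and for every x < 0 the one-sided limits exist and satisfy lim_{ε→0⁺} 𝔪(x+iε) = (lim_{ε→0⁺} 𝔪(x−iε)) · [[0,1],[−1,0]]. -/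
noncomputable section

open Complex MeasureTheory Filter Topology Set

/-- 2×2 complex matrices. -/
abbrev Mat2 := Matrix (Fin 2) (Fin 2) ℂ

/-- The "twist" matrix 𝔪(z) = diag(z^{-1/4}, z^{1/4}) · (1/√2)[[1,1],[-1,1]] · diag(e^{-iπ/4}, e^{iπ/4}),
with principal branches of the quarter powers (cut along (-∞,0]). -/
def twistMat (z : ℂ) : Mat2 :=
  !![z ^ (-(1:ℂ)/4), 0; 0, z ^ ((1:ℂ)/4)] *
    ((Real.sqrt 2 : ℂ)⁻¹ • !![(1:ℂ), 1; -1, 1]) *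
    !![Complex.exp (-((Real.pi : ℂ) * Complex.I) / 4), 0; 0, Complex.exp ((Real.pi : ℂ) * Complex.I / 4)]

/-- The open ray arg z = 2π/3. -/
def rayPlus : Set ℂ := {z : ℂ | z ≠ 0 ∧ z.arg = 2 * Real.pi / 3}

/-- The open ray arg z = -2π/3. -/
def rayMinus : Set ℂ := {z : ℂ | z ≠ 0 ∧ z.arg = -(2 * Real.pi / 3)}

/-- The open negative real axis (-∞, 0). -/
def negAxis : Set ℂ := {z : ℂ | z.im = 0 ∧ z.re < 0}

/-- Open sector lo < arg z < hi. -/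
def sector (lo hi : ℝ) : Set ℂ := {z : ℂ | lo < z.arg ∧ z.arg < hi}

/-- Lower-triangular jump matrix [[1, 0], [exp((4/3)z^{3/2} + 2 a z^{1/2}), 1]] (principal branches). -/
def Jlow (a : ℝ) (z : ℂ) : Mat2 :=
  !![1, 0; Complex.exp ((4/3) * z ^ ((3:ℂ)/2) + 2 * (a:ℂ) * z ^ ((1:ℂ)/2)), 1]

/-- Upper-triangular jump matrix [[1, exp(-(4/3)z^{3/2})], [0, 1]]. -/
def Jup (z : ℂ) : Mat2 := !![1, Complex.exp (-(4/3) * z ^ ((3:ℂ)/2)); 0, 1]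

/-- The twist jump matrix [[0, 1], [-1, 0]]. -/
def Jtwist : Mat2 := !![0, 1; -1, 0]

/-- `L` is the boundary value of `M` at `x` taken from within the set `S` (entrywise limit). -/
def BV (M : ℂ → Mat2) (S : Set ℂ) (x : ℂ) (L : Mat2) : Prop :=
  ∀ i j, Filter.Tendsto (fun w => M w i j) (nhdsWithin x S) (nhds (L i j))

/-- `M` stays bounded near the point `p` (off the contour `Sg`). -/
def BoundedNear (Sg : Set ℂ) (M : ℂ → Mat2) (p : ℂ) : Prop :=
  ∃ C ε : ℝ, 0 < ε ∧ ∀ z ∉ Sg, ‖z - p‖ < ε → ∀ i j, ‖M z i j‖ ≤ C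

/-- Near `p` (off the contour `Sg`): the first column of `M` stays bounded while the second
column is O(log|z - p|). -/
def LogColNear (Sg : Set ℂ) (M : ℂ → Mat2) (p : ℂ) : Prop :=
  ∃ C ε : ℝ, 0 < ε ∧ ∀ z ∉ Sg, ‖z - p‖ < ε →
    (∀ i, ‖M z i 0‖ ≤ C) ∧
    (∀ i, ‖M z i 1‖ ≤ C * (1 + |Real.log ‖z - p‖|))

/-- M(z) = 𝔪(z) · (I + O(1/z)) as z → ∞ off the contour `Sg`. -/
def AsympTwist (Sg : Set ℂ) (M : ℂ → Mat2) : Prop :=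
  ∃ C R : ℝ, ∀ z ∉ Sg, R < ‖z‖ →
    ∀ i j, ‖((twistMat z)⁻¹ * M z - 1) i j‖ ≤ C / ‖z‖

/-- The constant (2π)^{-1/2} e^{iπ/4}. -/
def cJan : ℂ := (Real.sqrt (2 * Real.pi) : ℂ)⁻¹ * Complex.exp ((Real.pi : ℂ) * Complex.I / 4)

/-- The closed negative real half-line (-∞, 0], viewed inside ℂ. -/
def cutSet : Set ℂ := {z : ℂ | z.im = 0 ∧ z.re ≤ 0}


/-- `e^{-iπ/4}`. -/
def aE : ℂ := Complex.exp (-((Real.pi : ℂ) * Complex.I) / 4)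

/-- `e^{iπ/4}`. -/
def bE : ℂ := Complex.exp ((Real.pi : ℂ) * Complex.I / 4)

def Bm : Mat2 := (Real.sqrt 2 : ℂ)⁻¹ • !![aE, bE; 0, 0]
def Cm : Mat2 := (Real.sqrt 2 : ℂ)⁻¹ • !![0, 0; -aE, bE]

lemma twistMat_eq (z : ℂ) : twistMat z = z ^ (-(1:ℂ)/4) • Bm + z ^ ((1:ℂ)/4) • Cm := by
  unfold twistMat Bm Cm aE bE
  ext i j
  fin_cases i <;> fin_cases j <;>
    simp [Matrix.mul_apply, Fin.sum_univ_two] <;> ring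

lemma hab : aE * bE = 1 := by
  unfold aE bE
  rw [← Complex.exp_add, show -((Real.pi:ℂ)*Complex.I)/4 + (Real.pi:ℂ)*Complex.I/4 = 0 by ring,
    Complex.exp_zero]

lemma hb2 : bE ^ 2 = Complex.I := by
  unfold bE
  rw [sq, ← Complex.exp_add,
    show (Real.pi:ℂ)*Complex.I/4 + (Real.pi:ℂ)*Complex.I/4 = ((Real.pi/2 : ℝ):ℂ) * Complex.I by
      push_cast; ring, Complex.exp_mul_I, ← Complex.ofReal_cos, ← Complex.ofReal_sin,
    Real.cos_pi_div_two, Real.sin_pi_div_two]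
  simp

lemma ha2 : aE ^ 2 = -Complex.I := by
  unfold aE
  rw [sq, ← Complex.exp_add,
    show -((Real.pi:ℂ)*Complex.I)/4 + -((Real.pi:ℂ)*Complex.I)/4
        = ((-(Real.pi/2) : ℝ):ℂ) * Complex.I by push_cast; ring,
    Complex.exp_mul_I, ← Complex.ofReal_cos, ← Complex.ofReal_sin,
    Real.cos_neg, Real.sin_neg, Real.cos_pi_div_two, Real.sin_pi_div_two]
  simp

lemma tendsto_cpow_upper {x : ℝ} (hx : x < 0) (c : ℂ) :
    Tendsto (fun ε : ℝ => ((x:ℂ) + (ε:ℂ) * Complex.I) ^ c) (𝓝[>] (0:ℝ))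
      (𝓝 (Complex.exp (((Real.log (‖(x:ℂ)‖) : ℝ) + Real.pi * Complex.I) * c))) := by
  have hcont : Tendsto (fun ε : ℝ => (x:ℂ) + (ε:ℂ) * Complex.I) (𝓝[>] (0:ℝ)) (𝓝 (x:ℂ)) := by
    have : Continuous fun ε : ℝ => (x:ℂ) + (ε:ℂ) * Complex.I := by continuity
    simpa using (this.tendsto 0).mono_left nhdsWithin_le_nhds
  have hbase : Tendsto (fun ε : ℝ => (x:ℂ) + (ε:ℂ) * Complex.I) (𝓝[>] (0:ℝ))
      (𝓝[{z : ℂ | 0 ≤ z.im}] (x:ℂ)) := by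
    refine tendsto_nhdsWithin_of_tendsto_nhds_of_eventually_within _ hcont ?_
    filter_upwards [self_mem_nhdsWithin] with ε (hε : 0 < ε)
    simp [le_of_lt hε]
  have hlog : Tendsto (fun ε : ℝ => Complex.log ((x:ℂ) + (ε:ℂ) * Complex.I)) (𝓝[>] (0:ℝ))
      (𝓝 ((Real.log (‖(x:ℂ)‖) : ℝ) + Real.pi * Complex.I)) :=
    (Complex.tendsto_log_nhdsWithin_im_nonneg_of_re_neg_of_im_zero
      (by simpa using hx) (by simp)).comp hbase
  have hexp : Tendsto (fun ε : ℝ => Complex.exp (Complex.log ((x:ℂ) + (ε:ℂ) * Complex.I) * c))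
      (𝓝[>] (0:ℝ))
      (𝓝 (Complex.exp (((Real.log (‖(x:ℂ)‖) : ℝ) + Real.pi * Complex.I) * c))) :=
    (Complex.continuous_exp.tendsto _).comp (hlog.mul_const c)
  refine hexp.congr' ?_
  filter_upwards [self_mem_nhdsWithin] with ε (hε : 0 < ε)
  rw [Complex.cpow_def_of_ne_zero]
  intro h
  have := congrArg Complex.im h
  simp [hε.ne'] at this

lemma tendsto_cpow_lower {x : ℝ} (hx : x < 0) (c : ℂ) :
    Tendsto (fun ε : ℝ => ((x:ℂ) - (ε:ℂ) * Complex.I) ^ c) (𝓝[>] (0:ℝ))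
      (𝓝 (Complex.exp (((Real.log (‖(x:ℂ)‖) : ℝ) - Real.pi * Complex.I) * c))) := by
  have hcont : Tendsto (fun ε : ℝ => (x:ℂ) - (ε:ℂ) * Complex.I) (𝓝[>] (0:ℝ)) (𝓝 (x:ℂ)) := by
    have : Continuous fun ε : ℝ => (x:ℂ) - (ε:ℂ) * Complex.I := by continuity
    simpa using (this.tendsto 0).mono_left nhdsWithin_le_nhds
  have hbase : Tendsto (fun ε : ℝ => (x:ℂ) - (ε:ℂ) * Complex.I) (𝓝[>] (0:ℝ))
      (𝓝[{z : ℂ | z.im < 0}] (x:ℂ)) := by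
    refine tendsto_nhdsWithin_of_tendsto_nhds_of_eventually_within _ hcont ?_
    filter_upwards [self_mem_nhdsWithin] with ε (hε : 0 < ε)
    simp [hε]
  have hlog : Tendsto (fun ε : ℝ => Complex.log ((x:ℂ) - (ε:ℂ) * Complex.I)) (𝓝[>] (0:ℝ))
      (𝓝 ((Real.log (‖(x:ℂ)‖) : ℝ) - Real.pi * Complex.I)) :=
    (Complex.tendsto_log_nhdsWithin_im_neg_of_re_neg_of_im_zero
      (by simpa using hx) (by simp)).comp hbase
  have hexp : Tendsto (fun ε : ℝ => Complex.exp (Complex.log ((x:ℂ) - (ε:ℂ) * Complex.I) * c))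
      (𝓝[>] (0:ℝ))
      (𝓝 (Complex.exp (((Real.log (‖(x:ℂ)‖) : ℝ) - Real.pi * Complex.I) * c))) :=
    (Complex.continuous_exp.tendsto _).comp (hlog.mul_const c)
  refine hexp.congr' ?_
  filter_upwards [self_mem_nhdsWithin] with ε (hε : 0 < ε)
  rw [Complex.cpow_def_of_ne_zero]
  intro h
  have := congrArg Complex.im h
  simp [hε.ne'] at this

/-- Fundamental solution of the twist problem: 𝔪 is analytic off (-∞,0], has determinant 1,
and its boundary values from above and below the cut satisfy 𝔪₊(x) = 𝔪₋(x)·[[0,1],[-1,0]]. -/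
theorem twist_fundamental_solution :
    (∀ z ∉ cutSet, ∀ i j, DifferentiableAt ℂ (fun w => twistMat w i j) z) ∧
    (∀ z ∉ cutSet, (twistMat z).det = 1) ∧
    (∀ x : ℝ, x < 0 → ∃ Mp Mm : Mat2,
      (∀ i j, Filter.Tendsto (fun ε : ℝ => twistMat ((x:ℂ) + (ε:ℂ) * Complex.I) i j)
        (𝓝[>] (0:ℝ)) (𝓝 (Mp i j))) ∧
      (∀ i j, Filter.Tendsto (fun ε : ℝ => twistMat ((x:ℂ) - (ε:ℂ) * Complex.I) i j)
        (𝓝[>] (0:ℝ)) (𝓝 (Mm i j))) ∧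
      Mp = Mm * Jtwist) := by
  refine ⟨?_, ?_, ?_⟩
  · -- analyticity
    intro z hz i j
    have hz' : z ∈ Complex.slitPlane := by
      rw [Complex.mem_slitPlane_iff]
      by_contra hc
      push_neg at hc
      exact hz ⟨hc.2, hc.1⟩
    have h1 : DifferentiableAt ℂ (fun w : ℂ => w ^ (-(1:ℂ)/4)) z :=
      differentiableAt_id.cpow (differentiableAt_const _) hz'
    have h2 : DifferentiableAt ℂ (fun w : ℂ => w ^ ((1:ℂ)/4)) z :=
      differentiableAt_id.cpow (differentiableAt_const _) hz'
    simp only [twistMat_eq, Matrix.add_apply, Matrix.smul_apply, smul_eq_mul]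
    exact (h1.mul_const _).add (h2.mul_const _)
  · -- determinant 1
    intro z hz
    have hz0 : z ≠ 0 := by rintro rfl; exact hz ⟨rfl, le_refl 0⟩
    have e1 : z ^ (-(1:ℂ)/4) * z ^ ((1:ℂ)/4) = 1 := by
      rw [← Complex.cpow_add _ _ hz0]; norm_num
    have e2 : Complex.exp (-((Real.pi:ℂ)*Complex.I)/4) * Complex.exp ((Real.pi:ℂ)*Complex.I/4)
        = 1 := hab
    have e3 : ((Real.sqrt 2 : ℂ)) ^ 2 = 2 := by
      rw [← Complex.ofReal_pow, Real.sq_sqrt (by norm_num : (0:ℝ) ≤ 2)]; norm_num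
    unfold twistMat
    rw [Matrix.det_mul, Matrix.det_mul, Matrix.det_smul, Matrix.det_fin_two_of,
      Matrix.det_fin_two_of, Matrix.det_fin_two_of]
    simp only [mul_zero, zero_mul, sub_zero, mul_one, one_mul, Fintype.card_fin]
    rw [e1, e2, inv_pow, e3]
    norm_num
  · -- boundary values and the twist jump
    intro x hx
    set L : ℂ := (Real.log (‖(x:ℂ)‖) : ℂ) with hL
    set E1 : ℂ := Complex.exp (-L/4) with hE1
    set E2 : ℂ := Complex.exp (L/4) with hE2
    have dup1 : Complex.exp ((L + Real.pi * Complex.I) * (-(1:ℂ)/4)) = E1 * aE := by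
      rw [hE1]; unfold aE
      rw [← Complex.exp_add]; ring_nf
    have dup2 : Complex.exp ((L + Real.pi * Complex.I) * ((1:ℂ)/4)) = E2 * bE := by
      rw [hE2]; unfold bE
      rw [← Complex.exp_add]; ring_nf
    have ddn1 : Complex.exp ((L - Real.pi * Complex.I) * (-(1:ℂ)/4)) = E1 * bE := by
      rw [hE1]; unfold bE
      rw [← Complex.exp_add]; ring_nf
    have ddn2 : Complex.exp ((L - Real.pi * Complex.I) * ((1:ℂ)/4)) = E2 * aE := by
      rw [hE2]; unfold aE
      rw [← Complex.exp_add]; ring_nf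
    refine ⟨(E1 * aE) • Bm + (E2 * bE) • Cm, (E1 * bE) • Bm + (E2 * aE) • Cm, ?_, ?_, ?_⟩
    · intro i j
      have h1 := tendsto_cpow_upper hx (-(1:ℂ)/4)
      have h2 := tendsto_cpow_upper hx ((1:ℂ)/4)
      rw [dup1] at h1
      rw [dup2] at h2
      have := (h1.mul_const (Bm i j)).add (h2.mul_const (Cm i j))
      simp only [twistMat_eq, Matrix.add_apply, Matrix.smul_apply, smul_eq_mul]
      exact this
    · intro i j
      have h1 := tendsto_cpow_lower hx (-(1:ℂ)/4)
      have h2 := tendsto_cpow_lower hx ((1:ℂ)/4)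
      rw [ddn1] at h1
      rw [ddn2] at h2
      have := (h1.mul_const (Bm i j)).add (h2.mul_const (Cm i j))
      simp only [twistMat_eq, Matrix.add_apply, Matrix.smul_apply, smul_eq_mul]
      exact this
    · ext i j
      fin_cases i <;> fin_cases j
      · simp [Bm, Cm, Jtwist, Matrix.mul_apply, Fin.sum_univ_two, smul_eq_mul]
        linear_combination ((Real.sqrt 2 : ℂ))⁻¹ * E1 * (ha2 + hb2)
      · simp [Bm, Cm, Jtwist, Matrix.mul_apply, Fin.sum_univ_two, smul_eq_mul]
        ring
      · simp [Bm, Cm, Jtwist, Matrix.mul_apply, Fin.sum_univ_two, smul_eq_mul]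
        ring
      · simp [Bm, Cm, Jtwist, Matrix.mul_apply, Fin.sum_univ_two, smul_eq_mul]
        linear_combination ((Real.sqrt 2 : ℂ))⁻¹ * E2 * (ha2 + hb2)
end
end

section
/- Lemma (GUE constrained left endpoint). For every a > 0 there is exactly one real number b < a such that ∫_b^a s · √((a−s)/(s−b)) ds = −π/2, namely b = (a − 2√(a²+3))/3. In particular, for a = 1 one gets b = −1. -/
noncomputable section

open Complex MeasureTheory Filter Topology Set


lemma key_integral (a b : ℝ) (hba : b < a) :
    (∫ s in b..a, s * Real.sqrt ((a - s) / (s - b)))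
      = Real.pi * (a - b) * (a + 3 * b) / 8 := by
  have hab : (0:ℝ) < a - b := sub_pos.2 hba
  have habne : a - b ≠ 0 := ne_of_gt hab
  set φ : ℝ → ℝ := fun θ => b + (a - b) * Real.sin θ ^ 2 with hφdef
  set I : Set ℝ := Set.Ioo 0 (Real.pi / 2) with hIdef
  have hmem : ∀ θ ∈ I, 0 < Real.sin θ ∧ Real.sin θ < 1 ∧ 0 < Real.cos θ := by
    intro θ hθ
    obtain ⟨h1, h2⟩ := hθ
    have hs : 0 < Real.sin θ := Real.sin_pos_of_pos_of_lt_pi h1 (h2.trans_le (by linarith [Real.pi_pos]))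
    have hs1 : Real.sin θ < 1 := by
      have hθI : θ ∈ Set.Icc (-(Real.pi/2)) (Real.pi/2) :=
        Set.mem_Icc.2 ⟨by linarith [Real.pi_pos], h2.le⟩
      have hpI : (Real.pi/2) ∈ Set.Icc (-(Real.pi/2)) (Real.pi/2) :=
        Set.mem_Icc.2 ⟨by linarith [Real.pi_pos], le_refl _⟩
      have := Real.strictMonoOn_sin hθI hpI h2
      simpa using this
    have hc : 0 < Real.cos θ := Real.cos_pos_of_mem_Ioo ⟨by linarith [Real.pi_pos], h2⟩
    exact ⟨hs, hs1, hc⟩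
  have hmono : StrictMonoOn φ I := by
    intro x hx y hy hxy
    have hx' := hmem x hx; have hy' := hmem y hy
    have hsin : Real.sin x < Real.sin y := by
      apply Real.strictMonoOn_sin _ _ hxy
      · exact Set.mem_Icc.2 ⟨by linarith [Real.pi_pos, hx.1], hx.2.le⟩
      · exact Set.mem_Icc.2 ⟨by linarith [Real.pi_pos, hy.1], hy.2.le⟩
    have : Real.sin x ^ 2 < Real.sin y ^ 2 := by nlinarith [hx'.1, hy'.1]
    simp only [hφdef]
    nlinarith
  have himg : φ '' I = Set.Ioo b a := by
    apply Set.Subset.antisymm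
    · rintro _ ⟨θ, hθ, rfl⟩
      obtain ⟨hs, hs1, _⟩ := hmem θ hθ
      have hpos : 0 < (a - b) * Real.sin θ ^ 2 := by positivity
      have hlt : (a - b) * Real.sin θ ^ 2 < (a - b) * 1 := by
        apply mul_lt_mul_of_pos_left _ hab
        nlinarith
      constructor
      · simp only [hφdef]; linarith
      · simp only [hφdef]; linarith
    · rintro s ⟨hs1, hs2⟩
      set u := Real.sqrt ((s - b) / (a - b)) with hu
      have hq0 : (0:ℝ) < (s - b) / (a - b) := div_pos (by linarith) hab
      have hq1 : (s - b) / (a - b) < 1 := (div_lt_one hab).2 (by linarith)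
      have hu2 : u ^ 2 = (s - b) / (a - b) := Real.sq_sqrt hq0.le
      have hu0 : 0 < u := Real.sqrt_pos.2 hq0
      have hu1 : u < 1 := by nlinarith [Real.sqrt_nonneg ((s - b) / (a - b))]
      refine ⟨Real.arcsin u, ⟨Real.arcsin_pos.2 hu0, (Real.arcsin_lt_pi_div_two).2 hu1⟩, ?_⟩
      have : Real.sin (Real.arcsin u) = u := Real.sin_arcsin (by linarith) hu1.le
      simp only [hφdef, this, hu2]
      field_simp
      ring
  have hderiv : ∀ θ ∈ I, HasDerivWithinAt φ ((a - b) * (2 * Real.sin θ * Real.cos θ)) I θ := by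
    intro θ hθ
    have h1 : HasDerivAt (fun θ => Real.sin θ ^ 2) (2 * Real.sin θ ^ 1 * Real.cos θ) θ :=
      (Real.hasDerivAt_sin θ).pow 2
    have h2 : HasDerivAt φ ((a - b) * (2 * Real.sin θ ^ 1 * Real.cos θ)) θ :=
      ((h1.const_mul (a - b)).const_add b)
    simpa [pow_one] using h2.hasDerivWithinAt
  have hCoV := integral_image_eq_integral_abs_deriv_smul measurableSet_Ioo hderiv
    (hmono.injOn) (fun s => s * Real.sqrt ((a - s) / (s - b)))
  rw [himg] at hCoV
  have hLHS : (∫ s in b..a, s * Real.sqrt ((a - s) / (s - b)))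
      = ∫ s in Set.Ioo b a, s * Real.sqrt ((a - s) / (s - b)) := by
    rw [intervalIntegral.integral_of_le hba.le, MeasureTheory.integral_Ioc_eq_integral_Ioo]
  have hEq : Set.EqOn
      (fun θ => |(a - b) * (2 * Real.sin θ * Real.cos θ)| •
        (φ θ * Real.sqrt ((a - φ θ) / (φ θ - b))))
      (fun θ => 2 * (a - b) * b * Real.cos θ ^ 2
        + 2 * (a - b) ^ 2 * (Real.sin θ ^ 2 * Real.cos θ ^ 2)) I := by
    intro θ hθ
    obtain ⟨hs, _, hc⟩ := hmem θ hθ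
    have h1 : a - φ θ = (a - b) * Real.cos θ ^ 2 := by
      simp only [hφdef]; rw [Real.cos_sq']; ring
    have h2 : φ θ - b = (a - b) * Real.sin θ ^ 2 := by simp only [hφdef]; ring
    have h3 : (a - φ θ) / (φ θ - b) = (Real.cos θ / Real.sin θ) ^ 2 := by
      rw [h1, h2, mul_div_mul_left _ _ habne, div_pow]
    have h4 : Real.sqrt ((a - φ θ) / (φ θ - b)) = Real.cos θ / Real.sin θ := by
      rw [h3, Real.sqrt_sq (by positivity)]
    have h5 : |(a - b) * (2 * Real.sin θ * Real.cos θ)|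
        = (a - b) * (2 * Real.sin θ * Real.cos θ) := abs_of_nonneg (by positivity)
    have hsne : Real.sin θ ≠ 0 := ne_of_gt hs
    simp only [smul_eq_mul]
    rw [h4, h5]
    have h6 : φ θ = b + (a - b) * Real.sin θ ^ 2 := rfl
    rw [h6]
    field_simp
  rw [hLHS, hCoV, MeasureTheory.setIntegral_congr_fun measurableSet_Ioo hEq]
  have hRint : (∫ θ in I, (2 * (a - b) * b * Real.cos θ ^ 2
        + 2 * (a - b) ^ 2 * (Real.sin θ ^ 2 * Real.cos θ ^ 2)))
      = ∫ θ in (0:ℝ)..(Real.pi / 2), (2 * (a - b) * b * Real.cos θ ^ 2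
        + 2 * (a - b) ^ 2 * (Real.sin θ ^ 2 * Real.cos θ ^ 2)) := by
    rw [intervalIntegral.integral_of_le (by positivity), MeasureTheory.integral_Ioc_eq_integral_Ioo]
  rw [hRint]
  have hint1 : IntervalIntegrable (fun θ => Real.cos θ ^ 2) volume 0 (Real.pi / 2) :=
    (Real.continuous_cos.pow 2).intervalIntegrable _ _
  have hint2 : IntervalIntegrable (fun θ => Real.sin θ ^ 2 * Real.cos θ ^ 2) volume 0 (Real.pi / 2) :=
    ((Real.continuous_sin.pow 2).mul (Real.continuous_cos.pow 2)).intervalIntegrable _ _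
  rw [intervalIntegral.integral_add (hint1.const_mul _) (hint2.const_mul _),
    intervalIntegral.integral_const_mul, intervalIntegral.integral_const_mul,
    integral_cos_sq, integral_sin_sq_mul_cos_sq]
  rw [Real.cos_pi_div_two, Real.sin_pi_div_two]
  have : Real.sin (4 * (Real.pi / 2)) = 0 := by
    rw [show 4 * (Real.pi / 2) = 2 * Real.pi by ring, Real.sin_two_pi]
  rw [this]
  simp
  ring

/-- GUE constrained left endpoint: for every a > 0 there is exactly one b < a with
∫_b^a s √((a-s)/(s-b)) ds = -π/2, namely b = (a - 2√(a²+3))/3; for a = 1 one gets b = -1. -/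
theorem gue_left_endpoint (a : ℝ) (ha : 0 < a) :
    ((a - 2 * Real.sqrt (a^2 + 3)) / 3 < a ∧
      (∫ s in ((a - 2 * Real.sqrt (a^2 + 3)) / 3)..a,
          s * Real.sqrt ((a - s) / (s - (a - 2 * Real.sqrt (a^2 + 3)) / 3)))
        = -(Real.pi / 2)) ∧
    (∀ b : ℝ, b < a →
      (∫ s in b..a, s * Real.sqrt ((a - s) / (s - b))) = -(Real.pi / 2) →
      b = (a - 2 * Real.sqrt (a^2 + 3)) / 3) ∧
    ((1 - 2 * Real.sqrt ((1:ℝ)^2 + 3)) / 3 = -1) := by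
  have hpi := Real.pi_pos
  set r := Real.sqrt (a^2 + 3) with hr
  have hr2 : r ^ 2 = a ^ 2 + 3 := Real.sq_sqrt (by positivity)
  have hrpos : 0 < r := Real.sqrt_pos.2 (by positivity)
  have hra : a < r := by nlinarith
  set b0 := (a - 2 * r) / 3 with hb0
  have hb0a : b0 < a := by rw [hb0]; linarith
  refine ⟨⟨hb0a, ?_⟩, ?_, ?_⟩
  · rw [key_integral a b0 hb0a]
    have h1 : (a - b0) * (a + 3 * b0) = -4 := by
      rw [hb0]; field_simp; nlinarith
    rw [mul_assoc, h1]
    ring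
  · intro b hb hint
    rw [key_integral a b hb] at hint
    have h2 : (a - b) * (a + 3 * b) = -4 := by
      have hne : Real.pi ≠ 0 := ne_of_gt hpi
      field_simp at hint
      nlinarith [hint]
    have h3 : (3 * b - (a - 2 * r)) * (3 * b - (a + 2 * r)) = 0 := by nlinarith
    rcases mul_eq_zero.1 h3 with h | h
    · rw [hb0]; linarith
    · exfalso; linarith
  · have h4 : Real.sqrt ((1:ℝ)^2 + 3) = 2 := by
      rw [show ((1:ℝ)^2 + 3) = 2^2 by norm_num, Real.sqrt_sq (by norm_num)]
    rw [h4]; norm_num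
end
end

section
/- Lemma (GUE constrained equilibrium density is a probability density). Let 0 < a ≤ 1 and let b = (a − 2√(a²+3))/3. Define ψ(x) = (2/π) · √((x−b)/(a−x)) · ((a−b)/2 − x) for x ∈ (b,a). Then ψ(x) > 0 for every x ∈ (b,a), and ∫_b^a ψ(x) dx = 1. In particular, for a = 1, b = −1 this reduces to the semicircle density ψ(x) = (2/π)√(1−x²). -/
noncomputable section

open Complex MeasureTheory Filter Topology Set

-- derivative of F at interior points
lemma gue_deriv (a b : ℝ) (hba : b < a) (x : ℝ) (hx : x ∈ Ioo b a) :
    HasDerivAt (fun y => Real.sqrt ((y - b) * (a - y)) * (y / 2 + (a + b) / 4)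
        + (b ^ 2 / 2 - (a + b) ^ 2 / 8) * Real.arcsin ((2 * y - a - b) / (a - b)))
      (Real.sqrt ((x - b) / (a - x)) * ((a - b) / 2 - x)) x := by
  obtain ⟨hx1, hx2⟩ := hx
  have hab : (0:ℝ) < a - b := by linarith
  have hs1 : (0:ℝ) < x - b := by linarith
  have hs2 : (0:ℝ) < a - x := by linarith
  have hq : (0:ℝ) < (x - b) * (a - x) := mul_pos hs1 hs2
  set s1 := Real.sqrt (x - b) with hs1def
  set s2 := Real.sqrt (a - x) with hs2def
  have hs1p : 0 < s1 := Real.sqrt_pos.mpr hs1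
  have hs2p : 0 < s2 := Real.sqrt_pos.mpr hs2
  have hsq : Real.sqrt ((x - b) * (a - x)) = s1 * s2 := Real.sqrt_mul hs1.le _
  have hs1sq : s1 ^ 2 = x - b := Real.sq_sqrt hs1.le
  have hs2sq : s2 ^ 2 = a - x := Real.sq_sqrt hs2.le
  have d1 : HasDerivAt (fun y => (y - b) * (a - y)) (a + b - 2 * x) x := by
    have := ((hasDerivAt_id x).sub_const b).mul ((hasDerivAt_const x a).sub (hasDerivAt_id x))
    exact this.congr_deriv (by simp; ring)
  have d2 : HasDerivAt (fun y => Real.sqrt ((y - b) * (a - y)))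
      (1 / (2 * Real.sqrt ((x - b) * (a - x))) * (a + b - 2 * x)) x :=
    (Real.hasDerivAt_sqrt hq.ne').comp x d1
  have d3 : HasDerivAt (fun y : ℝ => y / 2 + (a + b) / 4) (1 / 2) x := by
    simpa using ((hasDerivAt_id x).div_const 2).add_const ((a + b) / 4)
  have d4 := d2.mul d3
  have du : HasDerivAt (fun y : ℝ => (2 * y - a - b) / (a - b)) (2 / (a - b)) x := by
    have : HasDerivAt (fun y : ℝ => 2 * y - a - b) 2 x := by
      simpa using (((hasDerivAt_id x).const_mul 2).sub_const a).sub_const b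
    simpa using this.div_const (a - b)
  have hu1 : (-1:ℝ) < (2 * x - a - b) / (a - b) := by
    rw [lt_div_iff₀ hab]; linarith
  have hu2 : (2 * x - a - b) / (a - b) < 1 := by
    rw [div_lt_one hab]; linarith
  have darc := (Real.hasDerivAt_arcsin hu1.ne' hu2.ne).comp x du
  have hone : Real.sqrt (1 - ((2 * x - a - b) / (a - b)) ^ 2) = 2 * s1 * s2 / (a - b) := by
    have h1 : 1 - ((2 * x - a - b) / (a - b)) ^ 2 = (2 / (a - b)) ^ 2 * ((x - b) * (a - x)) := by
      field_simp; ring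
    rw [h1, Real.sqrt_mul (sq_nonneg _), Real.sqrt_sq (by positivity), hsq]
    ring
  have D := d4.add (darc.const_mul (b ^ 2 / 2 - (a + b) ^ 2 / 8))
  refine D.congr_deriv ?_
  rw [hsq, hone]
  have hq2 : (s1 * s2) ^ 2 = (x - b) * (a - x) := by rw [mul_pow, hs1sq, hs2sq]
  have h1 : Real.sqrt ((x - b) / (a - x)) * ((a - b) / 2 - x)
      = (x - b) * ((a - b) / 2 - x) / (s1 * s2) := by
    rw [Real.sqrt_div hs1.le, ← hs1sq]
    rw [show Real.sqrt (a - x) = s2 from rfl]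
    rw [Real.sqrt_sq hs1p.le]
    field_simp
  have h2 : 1 / (2 * (s1 * s2)) * (a + b - 2 * x) * (x / 2 + (a + b) / 4)
        + s1 * s2 * (1 / 2)
        + (b ^ 2 / 2 - (a + b) ^ 2 / 8) * (1 / (2 * s1 * s2 / (a - b)) * (2 / (a - b)))
      = ((a + b - 2 * x) * (x / 2 + (a + b) / 4) / 2 + (s1 * s2) ^ 2 / 2
          + (b ^ 2 / 2 - (a + b) ^ 2 / 8)) / (s1 * s2) := by
    field_simp
  have h3 : (a + b - 2 * x) * (x / 2 + (a + b) / 4) / 2 + (s1 * s2) ^ 2 / 2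
        + (b ^ 2 / 2 - (a + b) ^ 2 / 8) = (x - b) * ((a - b) / 2 - x) := by
    linear_combination hq2 / 2
  rw [h1, h2, h3]

-- integrability of the density
lemma gue_integrable (a b : ℝ) (hba : b < a) :
    IntervalIntegrable (fun x => Real.sqrt ((x - b) / (a - x)) * ((a - b) / 2 - x))
      volume b a := by
  have hab : (0:ℝ) < a - b := by linarith
  set M : ℝ := Real.sqrt (a - b) * (|(a - b) / 2| + |a| + |b|) with hM
  have hMnn : 0 ≤ M := by positivity
  have hint : IntervalIntegrable (fun x : ℝ => M * (a - x) ^ (-(1/2) : ℝ)) volume b a := by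
    have h0 : IntervalIntegrable (fun x : ℝ => x ^ (-(1/2) : ℝ)) volume 0 (a - b) :=
      intervalIntegral.intervalIntegrable_rpow' (by norm_num)
    have h1 := (h0.comp_sub_left a)
    simp only [sub_zero, sub_sub_cancel] at h1
    exact (h1.symm).const_mul M
  apply hint.mono_fun
  · apply Measurable.aestronglyMeasurable
    fun_prop
  · rw [Filter.EventuallyLE, ae_restrict_iff' measurableSet_uIoc]
    filter_upwards with x hx
    rw [uIoc_of_le hba.le] at hx
    obtain ⟨hx1, hx2⟩ := hx
    rcases eq_or_lt_of_le hx2 with rfl | hx2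
    · simp [sub_self, Real.zero_rpow, norm_mul]
    · have hax : (0:ℝ) < a - x := by linarith
      have hxb : (0:ℝ) < x - b := by linarith
      have hr : (a - x) ^ (-(1/2) : ℝ) = 1 / Real.sqrt (a - x) := by
        rw [Real.rpow_neg hax.le, Real.sqrt_eq_rpow]
        exact (one_div _).symm
      rw [Real.norm_eq_abs, Real.norm_eq_abs, abs_mul, _root_.abs_of_nonneg (Real.sqrt_nonneg _),
        hr]
      have hb1 : Real.sqrt ((x - b) / (a - x)) = Real.sqrt (x - b) / Real.sqrt (a - x) :=
        Real.sqrt_div hxb.le _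
      have hb2 : Real.sqrt (x - b) ≤ Real.sqrt (a - b) := Real.sqrt_le_sqrt (by linarith)
      have hb3 : |(a - b) / 2 - x| ≤ |(a - b) / 2| + |a| + |b| := by
        rw [abs_sub_comm]
        calc |x - (a-b)/2| ≤ |x| + |(a-b)/2| := abs_sub _ _
          _ ≤ (|a| + |b|) + |(a-b)/2| := by
              have : |x| ≤ max |a| |b| := by
                rw [abs_le]; constructor
                · have := neg_abs_le b; have := le_max_right |a| |b|; linarith
                · have := le_abs_self a; have := le_max_left |a| |b|; linarith
              have : max |a| |b| ≤ |a| + |b| :=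
                max_le (le_add_of_nonneg_right (abs_nonneg b)) (le_add_of_nonneg_left (abs_nonneg a))
              linarith [abs_nonneg a, abs_nonneg b, le_trans ‹|x| ≤ max |a| |b|› this]
          _ = |(a-b)/2| + |a| + |b| := by ring
      have hM2 : |M * (1 / Real.sqrt (a - x))| = M / Real.sqrt (a - x) := by
        rw [_root_.abs_of_nonneg (by positivity)]; ring
      rw [hM2, hb1]
      rw [div_mul_eq_mul_div, div_le_div_iff₀ (Real.sqrt_pos.mpr hax) (Real.sqrt_pos.mpr hax)]
      have := mul_le_mul hb2 hb3 (abs_nonneg _) (Real.sqrt_nonneg _)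
      nlinarith [Real.sqrt_pos.mpr hax, Real.sqrt_nonneg (a-x)]

lemma gue_integral (a b : ℝ) (hba : b < a) :
    (∫ x in b..a, Real.sqrt ((x - b) / (a - x)) * ((a - b) / 2 - x))
      = Real.pi * (b ^ 2 / 2 - (a + b) ^ 2 / 8) := by
  have hab : (0:ℝ) < a - b := by linarith
  set F : ℝ → ℝ := fun y => Real.sqrt ((y - b) * (a - y)) * (y / 2 + (a + b) / 4)
      + (b ^ 2 / 2 - (a + b) ^ 2 / 8) * Real.arcsin ((2 * y - a - b) / (a - b)) with hF
  have hcont : ContinuousOn F (Icc b a) := by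
    apply Continuous.continuousOn
    apply Continuous.add
    · exact (Real.continuous_sqrt.comp (by fun_prop)).mul (by fun_prop)
    · exact continuous_const.mul (Real.continuous_arcsin.comp (by fun_prop))
  have hderiv : ∀ x ∈ Ioo b a, HasDerivWithinAt F
      (Real.sqrt ((x - b) / (a - x)) * ((a - b) / 2 - x)) (Ioi x) x :=
    fun x hx => (gue_deriv a b hba x hx).hasDerivWithinAt
  rw [intervalIntegral.integral_eq_sub_of_hasDeriv_right_of_le hba.le hcont hderiv
    (gue_integrable a b hba)]
  have hFa : F a = (b ^ 2 / 2 - (a + b) ^ 2 / 8) * (Real.pi / 2) := by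
    simp only [hF]
    rw [show (2 * a - a - b) / (a - b) = 1 by rw [show 2*a - a - b = a - b by ring, div_self hab.ne']]
    rw [Real.arcsin_one]
    simp [sub_self]
  have hFb : F b = (b ^ 2 / 2 - (a + b) ^ 2 / 8) * (-(Real.pi / 2)) := by
    simp only [hF]
    rw [show (2 * b - a - b) / (a - b) = -1 by
      rw [show 2*b - a - b = -(a - b) by ring, neg_div, div_self hab.ne']]
    rw [Real.arcsin_neg_one]
    simp [sub_self]
  rw [hFa, hFb]
  ring

/-- The GUE constrained equilibrium density is a probability density; for a = 1 it reduces to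
the semicircle density. -/
theorem gue_density_probability (a : ℝ) (ha0 : 0 < a) (ha1 : a ≤ 1) :
    (∀ x ∈ Ioo ((a - 2 * Real.sqrt (a^2 + 3)) / 3) a,
      0 < (2 / Real.pi) * Real.sqrt ((x - (a - 2 * Real.sqrt (a^2 + 3)) / 3) / (a - x)) *
        ((a - (a - 2 * Real.sqrt (a^2 + 3)) / 3) / 2 - x)) ∧
    ((∫ x in ((a - 2 * Real.sqrt (a^2 + 3)) / 3)..a,
        (2 / Real.pi) * Real.sqrt ((x - (a - 2 * Real.sqrt (a^2 + 3)) / 3) / (a - x)) *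
          ((a - (a - 2 * Real.sqrt (a^2 + 3)) / 3) / 2 - x))
      = 1) ∧
    (∀ x ∈ Ioo (-1:ℝ) 1,
      (2 / Real.pi) * Real.sqrt ((x - (-1)) / (1 - x)) * ((1 - (-1)) / 2 - x)
        = (2 / Real.pi) * Real.sqrt (1 - x^2)) := by
  have hs : Real.sqrt (a^2 + 3) ^ 2 = a^2 + 3 := Real.sq_sqrt (by positivity)
  have hsnn : 0 ≤ Real.sqrt (a^2 + 3) := Real.sqrt_nonneg _
  have h2a : 2 * a ≤ Real.sqrt (a^2 + 3) := by
    have h := Real.sqrt_le_sqrt (show (2*a)^2 ≤ a^2 + 3 by nlinarith)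
    rwa [Real.sqrt_sq (by positivity)] at h
  set b := (a - 2 * Real.sqrt (a^2 + 3)) / 3 with hb
  have hba : b < a := by rw [hb]; nlinarith
  have hbneg : b ≤ -a := by rw [hb]; nlinarith
  have hca : a ≤ (a - b) / 2 := by linarith
  refine ⟨?_, ?_, ?_⟩
  · intro x hx
    obtain ⟨hx1, hx2⟩ := hx
    have h1 : 0 < 2 / Real.pi := by positivity
    have h2 : 0 < Real.sqrt ((x - b) / (a - x)) :=
      Real.sqrt_pos.mpr (div_pos (by linarith) (by linarith))
    have h3 : 0 < (a - b) / 2 - x := by linarith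
    exact mul_pos (mul_pos h1 h2) h3
  · have hγ : b ^ 2 / 2 - (a + b) ^ 2 / 8 = 1 / 2 := by
      rw [hb]; linear_combination hs / 6
    simp_rw [mul_assoc]
    rw [intervalIntegral.integral_const_mul, gue_integral a b hba, hγ]
    rw [div_mul_eq_mul_div, mul_comm]
    field_simp
  · intro x hx
    obtain ⟨hx1, hx2⟩ := hx
    have h1x : (0:ℝ) < 1 - x := by linarith
    have h1x' : (0:ℝ) ≤ x - (-1) := by linarith
    have key : Real.sqrt ((x - -1) / (1 - x)) * ((1 - -1) / 2 - x) = Real.sqrt (1 - x^2) := by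
      rw [Real.sqrt_div h1x' _, show (1 - (-1:ℝ)) / 2 - x = 1 - x by ring,
        div_mul_eq_mul_div, mul_comm (Real.sqrt (x - -1)) (1 - x), mul_div_right_comm,
        Real.div_sqrt, ← Real.sqrt_mul h1x.le, show (1 - x) * (x - -1) = 1 - x^2 by ring]
    rw [mul_assoc, key]
end
end
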